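/- The change of coordinates u = x/(a x³ - 1)^{1/3}, v = y/(a x³ - 1)^{1/3} transforms the system ẋ = -y + a x³ y, ẏ = x + a x² y² into the linear system u̇ = -v, v̇ = u, i.e., along solutions of the original system one has u̇ = -v and v̇ = u wherever a x³ - 1 > 0 (or on a suitable branch near the origin). -/

import Mathlib

/-- u = x/(ax³-1)^{1/3}, v = y/(ax³-1)^{1/3} linearizes ẋ = -y+ax³y, ẏ = x+ax²y²
along solutions staying in the region ax³-1 > 0. -/
theorem stmt_4 (a : ℝ) (x y : ℝ → ℝ)
    (hx : ∀ t, HasDerivAt x (-(y t) + a * (x t) ^ 3 * y t) t)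
    (hy : ∀ t, HasDerivAt y (x t + a * (x t) ^ 2 * (y t) ^ 2) t)
    (hpos : ∀ t, a * (x t) ^ 3 - 1 > 0) :
    ∀ t,
      HasDerivAt (fun s => x s / (a * (x s) ^ 3 - 1) ^ ((1:ℝ)/3))
        (-(y t / (a * (x t) ^ 3 - 1) ^ ((1:ℝ)/3))) t ∧
      HasDerivAt (fun s => y s / (a * (x s) ^ 3 - 1) ^ ((1:ℝ)/3))
        (x t / (a * (x t) ^ 3 - 1) ^ ((1:ℝ)/3)) t := by
  intro t
  have hw : 0 < a * (x t) ^ 3 - 1 := hpos t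
  set c : ℝ := (a * (x t) ^ 3 - 1) ^ ((1:ℝ)/3) with hc
  have hcpos : 0 < c := Real.rpow_pos_of_pos hw _
  have hc3 : c ^ 3 = a * (x t) ^ 3 - 1 := by
    rw [hc, ← Real.rpow_natCast ((a * (x t) ^ 3 - 1) ^ ((1:ℝ)/3)) 3,
      ← Real.rpow_mul hw.le]
    norm_num
  have hexp : (a * (x t) ^ 3 - 1) ^ ((1:ℝ)/3 - 1) = (c ^ 2)⁻¹ := by
    rw [show (1:ℝ)/3 - 1 = -(2/3) by norm_num, Real.rpow_neg hw.le]
    congr 1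
    rw [hc, ← Real.rpow_natCast ((a * (x t) ^ 3 - 1) ^ ((1:ℝ)/3)) 2,
      ← Real.rpow_mul hw.le]
    norm_num
  have hinner : HasDerivAt (fun s => a * (x s) ^ 3 - 1)
      (a * (3 * (x t) ^ 2 * (-(y t) + a * (x t) ^ 3 * y t))) t := by
    have h := (((hx t).pow 3).const_mul a).sub_const 1
    simpa [mul_comm, mul_assoc, mul_left_comm] using h
  have hp : HasDerivAt (fun s => (a * (x s) ^ 3 - 1) ^ ((1:ℝ)/3))
      ((1/3 * (a * (x t) ^ 3 - 1) ^ ((1:ℝ)/3 - 1)) *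
        (a * (3 * (x t) ^ 2 * (-(y t) + a * (x t) ^ 3 * y t)))) t := by
    have h := (Real.hasDerivAt_rpow_const (p := (1:ℝ)/3) (Or.inl hw.ne')).comp t hinner
    simpa [Function.comp_def, mul_comm, mul_assoc, mul_left_comm] using h
  constructor
  · have h := (hx t).div hp hcpos.ne'
    refine (h.congr_deriv ?_); symm
    rw [hexp]
    rw [← hc]
    field_simp
    linear_combination (-(y t)*a*(x t)^3) * hc3
  · have h := (hy t).div hp hcpos.ne'
    refine (h.congr_deriv ?_); symm
    rw [hexp]
    rw [← hc]
    field_simp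
    linear_combination (-(x t)^2*a*(y t)^2) * hc3
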